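/- Let X and Y be nonempty sets and let F : X* → Y be a function. The following assertions are equivalent: (i) F is B-preassociative and arity-wise quasi-range-idempotent; (ii) there exist a B-associative ε-standard operation H : X* → X ∪ {ε} and, for each n ≥ 1, an injective function f_n : ran(H_n) → Y, such that F_n = f_n ∘ H_n for every n ≥ 1. Moreover, if condition (ii) holds, then F_n = δ_{F_n} ∘ H_n and f_n = δ_{F_n}|_{ran(H_n)} for every n ≥ 1. -/

import Mathlib

/-- `RepStr F y` is the string `F(y)^{|y|}`: `|y|` copies of `F y` if `F y ∈ X`,
and the empty string if `F y = ε` (here `ε` is encoded by `none`). -/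
def RepStr {X : Type*} (F : List X → Option X) (y : List X) : List X :=
  match F y with
  | some a => List.replicate y.length a
  | none => []

/-- `F` is barycentrically associative. -/
def BAssoc {X : Type*} (F : List X → Option X) : Prop :=
  ∀ x y z : List X, F (x ++ y ++ z) = F (x ++ RepStr F y ++ z)

/-- `F` is ε-standard: `F x = ε` iff `x = ε`. -/
def EpsStd {X : Type*} (F : List X → Option X) : Prop :=
  ∀ x : List X, F x = none ↔ x = []

/-- `F` is barycentrically preassociative. -/
def BPreassoc {X Y : Type*} (F : List X → Y) : Prop :=
  ∀ x y y' z : List X, y.length = y'.length → F y = F y' →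
    F (x ++ y ++ z) = F (x ++ y' ++ z)

/-- `F` is arity-wise range-idempotent: `F (F(x)^{|x|}) = F x`. -/
def AWRI {X : Type*} (F : List X → Option X) : Prop :=
  ∀ x : List X, F (RepStr F x) = F x

/-- `F` is arity-wise quasi-range-idempotent: `ran δ_{F_n} = ran F_n` for all `n ≥ 1`. -/
def AWQRI {X Y : Type*} (F : List X → Y) : Prop :=
  ∀ n : ℕ, 1 ≤ n →
    Set.range (fun u : X => F (List.replicate n u)) = F '' {l : List X | l.length = n}

/-- `g` is a quasi-inverse of `f`: `f (g b) = b` for every `b ∈ ran f`, and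
`g (ran f) = ran g`. -/
def QuasiInv {α β : Type*} (f : α → β) (g : β → α) : Prop :=
  (∀ b ∈ Set.range f, f (g b) = b) ∧ g '' Set.range f = Set.range g

lemma repstr_some {X : Type*} (H : List X → Option X) (l : List X) (a : X)
    (h : H l = some a) : RepStr H l = List.replicate l.length a := by
  unfold RepStr; rw [h]

lemma repstr_none {X : Type*} (H : List X → Option X) (l : List X)
    (h : H l = none) : RepStr H l = [] := by
  unfold RepStr; rw [h]

lemma bassoc_rep {X : Type*} (H : List X → Option X) (hB : BAssoc H)
    (l : List X) (a : X) (h : H l = some a) :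
    H (List.replicate l.length a) = some a := by
  have := hB [] l []
  simp only [List.nil_append, List.append_nil] at this
  rw [repstr_some H l a h] at this
  rw [← this, h]

/-- `F : X* → Y` is B-preassociative and arity-wise
quasi-range-idempotent iff there are a B-associative ε-standard operation `H`
and injective functions `f_n : ran H_n → Y` with `F_n = f_n ∘ H_n` for every
`n ≥ 1`.  Moreover, in that case `F_n = δ_{F_n} ∘ H_n` and
`f_n = δ_{F_n}|_{ran H_n}`. -/
theorem stmt_15 {X Y : Type*} [Nonempty X] [Nonempty Y] (F : List X → Y) :
    ((BPreassoc F ∧ AWQRI F) ↔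
      (∃ H : List X → Option X, BAssoc H ∧ EpsStd H ∧
        ∃ f : ℕ → X → Y, ∀ n : ℕ, 1 ≤ n →
          Set.InjOn (f n) {a : X | ∃ l : List X, l.length = n ∧ H l = some a} ∧
          ∀ l : List X, l.length = n → ∀ a : X, H l = some a → F l = f n a)) ∧
    (∀ (H : List X → Option X) (f : ℕ → X → Y),
      BAssoc H → EpsStd H →
      (∀ n : ℕ, 1 ≤ n →
        Set.InjOn (f n) {a : X | ∃ l : List X, l.length = n ∧ H l = some a} ∧
        ∀ l : List X, l.length = n → ∀ a : X, H l = some a → F l = f n a) →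
      ∀ n : ℕ, 1 ≤ n →
        (∀ l : List X, l.length = n → ∀ a : X, H l = some a →
          F l = F (List.replicate n a)) ∧
        (∀ a ∈ {a : X | ∃ l : List X, l.length = n ∧ H l = some a},
          f n a = F (List.replicate n a))) := by
  classical
  constructor
  · constructor
    · rintro ⟨hpre, hq⟩
      -- choose a quasi-inverse g n : Y → X
      set g : ℕ → Y → X := fun n y =>
        if h : ∃ u, F (List.replicate n u) = y then h.choose else Classical.arbitrary X
        with hgdef
      have hgspec : ∀ n y, (∃ u, F (List.replicate n u) = y) →
          F (List.replicate n (g n y)) = y := by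
        intro n y h; simp only [hgdef, dif_pos h]; exact h.choose_spec
      have hex : ∀ l : List X, l ≠ [] → ∃ u, F (List.replicate l.length u) = F l := by
        intro l hl
        have h1 : 1 ≤ l.length := List.length_pos_iff.mpr hl
        have := hq l.length h1
        have : F l ∈ Set.range (fun u : X => F (List.replicate l.length u)) := by
          rw [this]; exact ⟨l, rfl, rfl⟩
        exact this
      have hFH : ∀ l : List X, l ≠ [] →
          F (List.replicate l.length (g l.length (F l))) = F l := fun l hl =>
        hgspec l.length (F l) (hex l hl)
      refine ⟨fun l => if l = [] then none else some (g l.length (F l)), ?_, ?_, ?_⟩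
      · -- BAssoc
        intro x y z
        by_cases hy : y = []
        · subst hy
          have : RepStr (fun l => if l = [] then none else some (g l.length (F l)))
              ([] : List X) = [] := repstr_none _ _ (by simp)
          rw [this]
        · set H : List X → Option X :=
            fun l => if l = [] then none else some (g l.length (F l)) with hHdef
          have hm : 1 ≤ y.length := List.length_pos_iff.mpr hy
          set a := g y.length (F y) with hadef
          have hHy : H y = some a := by simp [hHdef, hy, hadef]
          have hrep : RepStr H y = List.replicate y.length a := repstr_some H y a hHy
          rw [hrep]
          have hne1 : x ++ y ++ z ≠ [] := by simp [hy]
          have hne2 : x ++ List.replicate y.length a ++ z ≠ [] := by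
            intro h
            have := congrArg List.length h
            simp only [List.length_append, List.length_replicate, List.length_nil] at this
            omega
          have hlen : (x ++ List.replicate y.length a ++ z).length = (x ++ y ++ z).length := by
            simp
          have hFeq : F (x ++ y ++ z) = F (x ++ List.replicate y.length a ++ z) :=
            hpre x y (List.replicate y.length a) z (by simp) (hFH y hy).symm
          show H _ = H _
          simp only [hHdef, if_neg hne1, if_neg hne2]
          rw [hlen, hFeq]
      · -- EpsStd
        intro l
        by_cases hl : l = [] <;> simp [hl]
      · -- f
        refine ⟨fun n a => F (List.replicate n a), fun n hn => ⟨?_, ?_⟩⟩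
        · rintro a ⟨l, hl, hHl⟩ b ⟨l', hl', hHl'⟩ hfeq
          have hlne : l ≠ [] := by rintro rfl; simp at hHl
          have hlne' : l' ≠ [] := by rintro rfl; simp at hHl'
          simp only [if_neg hlne] at hHl
          simp only [if_neg hlne'] at hHl'
          have ha : a = g n (F l) := by rw [← hl]; exact (Option.some_injective X hHl).symm
          have hb : b = g n (F l') := by rw [← hl']; exact (Option.some_injective X hHl').symm
          have hFa : F (List.replicate n a) = F l := by
            rw [ha, ← hl]; exact hFH l hlne
          have hFb : F (List.replicate n b) = F l' := by
            rw [hb, ← hl']; exact hFH l' hlne'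
          have : F l = F l' := by rw [← hFa, ← hFb]; exact hfeq
          rw [ha, hb, this]
        · intro l hl a hHl
          have hlne : l ≠ [] := by rintro rfl; simp at hl; omega
          simp only [if_neg hlne] at hHl
          have ha : a = g n (F l) := by rw [← hl]; exact (Option.some_injective X hHl).symm
          rw [ha, ← hl]; exact (hFH l hlne).symm
    · rintro ⟨H, hB, hE, f, hf⟩
      constructor
      · -- BPreassoc
        intro x y y' z hlen hFyy'
        by_cases hy : y = []
        · subst hy
          have : y' = [] := List.length_eq_zero_iff.mp (by simpa using hlen.symm)
          subst this; rfl
        · have hy' : y' ≠ [] := by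
            intro h; subst h; simp at hlen; exact hy hlen
          obtain ⟨a, ha⟩ := Option.ne_none_iff_exists'.mp (fun h => hy ((hE y).mp h))
          obtain ⟨b, hb⟩ := Option.ne_none_iff_exists'.mp (fun h => hy' ((hE y').mp h))
          have hm : 1 ≤ y.length := List.length_pos_iff.mpr hy
          have hFya := (hf y.length hm).2 y rfl a ha
          have hFyb := (hf y.length hm).2 y' hlen.symm b hb
          have hab : a = b := (hf y.length hm).1 ⟨y, rfl, ha⟩ ⟨y', hlen.symm, hb⟩
            (by rw [← hFya, ← hFyb, hFyy'])
          subst hab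
          have h1 := hB x y z
          have h2 := hB x y' z
          rw [repstr_some H y a ha] at h1
          rw [repstr_some H y' a hb, ← hlen] at h2
          have hHeq : H (x ++ y ++ z) = H (x ++ y' ++ z) := by rw [h1, h2]
          have hNne : x ++ y ++ z ≠ [] := by simp [hy]
          obtain ⟨c, hc⟩ := Option.ne_none_iff_exists'.mp (fun h => hNne ((hE _).mp h))
          have hN : 1 ≤ (x ++ y ++ z).length := List.length_pos_iff.mpr hNne
          have e1 := (hf _ hN).2 (x ++ y ++ z) rfl c hc
          have e2 := (hf _ hN).2 (x ++ y' ++ z) (by simp [hlen]) c (by rw [← hHeq]; exact hc)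
          rw [e1, e2]
      · -- AWQRI
        intro n hn
        apply Set.Subset.antisymm
        · rintro _ ⟨u, rfl⟩
          exact ⟨List.replicate n u, by simp, rfl⟩
        · rintro _ ⟨l, hl, rfl⟩
          have hl' : l.length = n := hl
          have hlne : l ≠ [] := by
            rintro rfl; simp at hl'; omega
          obtain ⟨a, ha⟩ := Option.ne_none_iff_exists'.mp (fun h => hlne ((hE l).mp h))
          have hrep : H (List.replicate n a) = some a := by
            have := bassoc_rep H hB l a ha; rwa [hl'] at this
          have e1 := (hf n hn).2 l hl' a ha
          have e2 := (hf n hn).2 (List.replicate n a) (by simp) a hrep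
          exact ⟨a, by show F (List.replicate n a) = F l; rw [e1, e2]⟩
  · intro H f hB hE hf n hn
    have key : ∀ l : List X, l.length = n → ∀ a : X, H l = some a →
        F l = F (List.replicate n a) := by
      intro l hl a ha
      have hrep : H (List.replicate n a) = some a := by
        have := bassoc_rep H hB l a ha; rwa [hl] at this
      have e1 := (hf n hn).2 l hl a ha
      have e2 := (hf n hn).2 (List.replicate n a) (by simp) a hrep
      rw [e1, e2]
    refine ⟨key, ?_⟩
    rintro a ⟨l, hl, ha⟩
    have hrep : H (List.replicate n a) = some a := by
      have := bassoc_rep H hB l a ha; rwa [hl] at this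
    exact ((hf n hn).2 (List.replicate n a) (by simp) a hrep).symm
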